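/- Let Φ be the cumulative distribution function of the standard Gaussian measure on ℝ (mean 0, variance 1). For every α ∈ (0,1), every p ∈ (1-α, 1), and all x, y ∈ ℝ such that Φ(x) = α/2 and Φ(y) = (1 - (1-α)/p)/2, it holds that p · y < x. -/

import Mathlib

open ProbabilityTheory MeasureTheory Set Real

noncomputable def stdGaussianCDF : ℝ → ℝ := fun x => cdf (gaussianReal 0 1) x

private noncomputable def phi : ℝ → ℝ := gaussianPDFReal 0 1

private lemma phi_cont : Continuous phi := by
  unfold phi
  rw [gaussianPDFReal_def]
  continuity

private lemma phi_pos (t : ℝ) : 0 < phi t := gaussianPDFReal_pos 0 1 t one_ne_zero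

private lemma phi_integrable : Integrable phi := integrable_gaussianPDFReal 0 1

private lemma phi_even (t : ℝ) : phi (-t) = phi t := by
  unfold phi gaussianPDFReal
  norm_num

private lemma phi_strictAnti : StrictAntiOn phi (Ici 0) := by
  intro s hs t ht hst
  unfold phi gaussianPDFReal
  simp only [sub_zero]
  have hs0 : (0:ℝ) ≤ s := hs
  refine mul_lt_mul_of_pos_left ?_ (by positivity)
  apply Real.exp_lt_exp.mpr
  have h2 : s^2 < t^2 := by nlinarith
  push_cast
  nlinarith

private lemma cdf_eq_integral (t : ℝ) : stdGaussianCDF t = ∫ u in Iic t, phi u := by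
  unfold stdGaussianCDF
  rw [cdf_eq_real, measureReal_def, gaussianReal_apply_eq_integral 0 one_ne_zero,
    ENNReal.toReal_ofReal (setIntegral_nonneg measurableSet_Iic
      (fun u _ => gaussianPDFReal_nonneg 0 1 u))]
  rfl

private lemma cdf_symm (t : ℝ) : stdGaussianCDF (-t) = 1 - stdGaussianCDF t := by
  rw [cdf_eq_integral, cdf_eq_integral]
  have h1 := integral_comp_neg_Iic (-t) phi
  simp only [phi_even, neg_neg] at h1
  rw [h1, ← compl_Iic,
    setIntegral_compl measurableSet_Iic phi_integrable]
  have : ∫ u, phi u = 1 := integral_gaussianPDFReal_eq_one 0 one_ne_zero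
  rw [this]

private lemma cdf_zero : stdGaussianCDF 0 = 1/2 := by
  have := cdf_symm 0
  rw [neg_zero] at this
  linarith

private lemma cdf_diff (s t : ℝ) :
    stdGaussianCDF t - stdGaussianCDF s = ∫ u in s..t, phi u := by
  rw [cdf_eq_integral, cdf_eq_integral,
    intervalIntegral.integral_Iic_sub_Iic phi_integrable.integrableOn
      phi_integrable.integrableOn]

private lemma key_ineq {p a : ℝ} (hp0 : 0 < p) (hp1 : p < 1) (ha : 0 < a) :
    p * ∫ u in (0:ℝ)..a, phi u < ∫ u in (0:ℝ)..(p*a), phi u := by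
  set c := phi (p*a) with hc
  have hc0 : 0 < c := phi_pos _
  have hpa : 0 < p * a := mul_pos hp0 ha
  have hpaa : p * a < a := by nlinarith
  have hii : ∀ s t : ℝ, IntervalIntegrable phi volume s t :=
    fun s t => phi_cont.intervalIntegrable s t
  have hanti := phi_strictAnti.antitoneOn
  have h1 : (p*a) * c ≤ ∫ u in (0:ℝ)..(p*a), phi u := by
    have hm := intervalIntegral.integral_mono_on (μ := volume) (f := fun _ => c)
      (g := phi) (le_of_lt hpa) (intervalIntegrable_const) (hii 0 (p*a))
      (fun u hu => hanti (mem_Ici.mpr hu.1) (le_of_lt hpa) hu.2)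
    simpa using hm
  have h2 : ∫ u in (p*a)..a, phi u < (a - p*a) * c := by
    have hpos : 0 < ∫ u in (p*a)..a, (c - phi u) := by
      apply intervalIntegral.intervalIntegral_pos_of_pos_on
        ((intervalIntegrable_const).sub (hii (p*a) a))
      · intro u hu
        have : phi u < c := phi_strictAnti (le_of_lt hpa) (le_of_lt (hpa.trans hu.1)) hu.1
        linarith
      · exact hpaa
    have hsplit : ∫ u in (p*a)..a, (c - phi u) =
        (a - p*a) * c - ∫ u in (p*a)..a, phi u := by
      rw [intervalIntegral.integral_sub (intervalIntegrable_const) (hii (p*a) a)]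
      simp [smul_eq_mul]
    rw [hsplit] at hpos
    linarith
  have h3 : (∫ u in (0:ℝ)..(p*a), phi u) + ∫ u in (p*a)..a, phi u
      = ∫ u in (0:ℝ)..a, phi u :=
    intervalIntegral.integral_add_adjacent_intervals (hii 0 (p*a)) (hii (p*a) a)
  nlinarith [h1, h2, h3]

theorem gaussian_failure_lower (α p : ℝ) (hα : α ∈ Set.Ioo (0 : ℝ) 1)
    (hp : p ∈ Set.Ioo (1 - α) 1) (x y : ℝ)
    (hx : stdGaussianCDF x = α / 2)
    (hy : stdGaussianCDF y = (1 - (1 - α) / p) / 2) :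
    p * y < x := by
  obtain ⟨hα0, hα1⟩ := hα
  obtain ⟨hpq, hp1⟩ := hp
  have hq0 : 0 < 1 - α := by linarith
  have hp0 : 0 < p := lt_trans hq0 hpq
  have hqp : (1 - α) / p < 1 := (div_lt_one hp0).mpr hpq
  have hqp0 : 0 < (1 - α) / p := div_pos hq0 hp0
  -- y < 0
  have hy0 : y < 0 := by
    by_contra h
    push_neg at h
    have := monotone_cdf (gaussianReal 0 1) h
    have h2 : stdGaussianCDF 0 ≤ stdGaussianCDF y := this
    rw [cdf_zero, hy] at h2
    linarith
  set a := -y with hadef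
  have ha : 0 < a := by linarith
  have hΦa : stdGaussianCDF a = (1 + (1 - α) / p) / 2 := by
    have := cdf_symm y
    rw [← hadef] at *
    rw [hy] at this
    -- this : stdGaussianCDF (-y) = 1 - (1 - (1-α)/p)/2, and a = -y
    have h4 : stdGaussianCDF a = 1 - (1 - (1 - α) / p) / 2 := by
      rw [hadef]; rw [cdf_symm, hy]
    rw [h4]; ring
  -- integrals
  have hInt_a : ∫ u in (0:ℝ)..a, phi u = (1 - α) / p / 2 := by
    have := cdf_diff 0 a
    rw [hΦa, cdf_zero] at this
    linarith [this]
  have hkey := key_ineq hp0 hp1 ha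
  rw [hInt_a] at hkey
  have hΦpa : stdGaussianCDF (p * a) > (1 + (1 - α)) / 2 := by
    have := cdf_diff 0 (p * a)
    rw [cdf_zero] at this
    have hval : p * ((1 - α) / p / 2) = (1 - α) / 2 := by
      field_simp
    rw [hval] at hkey
    linarith
  -- Φ(p*y) < Φ(x)
  have hmain : stdGaussianCDF (p * y) < stdGaussianCDF x := by
    have h5 : p * y = -(p * a) := by rw [hadef]; ring
    rw [h5, cdf_symm, hx]
    linarith
  by_contra h
  push_neg at h
  exact absurd (monotone_cdf (gaussianReal 0 1) h) (not_le.mpr hmain)
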